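/- Let h : ℝ → ℝ be continuous, nonnegative on [0,∞), and let K, ε, R > 0 satisfy ∫₀^∞ ds/(K·h(s) + ε) > R. Then there exists a > 0 with ∫₀ᵃ ds/(K·h(s) + ε) = R, and the inverse function ū of t ↦ ∫_t^a ds/(K·h(s) + ε) solves the initial value problem −ū'(r) = K·h(ū(r)) + ε on (0, R) with ū(R) = 0. -/

import Mathlib

open Set MeasureTheory intervalIntegral

theorem stmt_7 (h : ℝ → ℝ) (hcont : Continuous h) (hpos : ∀ s, 0 ≤ s → 0 ≤ h s)
    (K ε R : ℝ) (hK : 0 < K) (hε : 0 < ε) (hR : 0 < R)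
    (hbig : ENNReal.ofReal R <
      ∫⁻ s in Set.Ioi (0 : ℝ), ENNReal.ofReal (1 / (K * h s + ε))) :
    ∃ a > 0, (∫ s in (0 : ℝ)..a, 1 / (K * h s + ε)) = R ∧
      ∃ ubar : ℝ → ℝ,
        (∀ t ∈ Set.Icc (0 : ℝ) a, ubar (∫ s in t..a, 1 / (K * h s + ε)) = t) ∧
        ubar R = 0 ∧
        (∀ r ∈ Set.Ioo (0 : ℝ) R, HasDerivAt ubar (-(K * h (ubar r) + ε)) r) := by
  set f : ℝ → ℝ := fun s => 1 / (K * h s + ε) with hf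
  have hd : ∀ s, 0 ≤ s → 0 < K * h s + ε := fun s hs =>
    add_pos_of_nonneg_of_pos (mul_nonneg hK.le (hpos s hs)) hε
  have hfpos : ∀ s, 0 ≤ s → 0 < f s := fun s hs => by
    simpa [hf] using one_div_pos.2 (hd s hs)
  have hfm : Measurable f := by
    simp only [hf, one_div]
    exact ((continuous_const.mul hcont).add continuous_const).measurable.inv
  have hfca : ∀ s, 0 ≤ s → ContinuousAt f s := fun s hs =>
    ContinuousAt.div continuousAt_const
      (((continuous_const.mul hcont).add continuous_const).continuousAt) (hd s hs).ne'
  have hint : ∀ u v : ℝ, 0 ≤ u → 0 ≤ v → IntervalIntegrable f volume u v := by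
    intro u v hu hv
    apply ContinuousOn.intervalIntegrable
    intro x hx
    exact (hfca x (le_trans (le_min hu hv) hx.1)).continuousWithinAt
  -- find n with R < ∫ 0..n f
  have hUnion : Ioi (0:ℝ) = ⋃ n : ℕ, Ioc (0:ℝ) n := by
    ext x
    simp only [mem_Ioi, mem_iUnion, mem_Ioc]
    exact ⟨fun hx => (exists_nat_ge x).imp fun n hn => ⟨hx, hn⟩, fun ⟨n, hx, _⟩ => hx⟩
  have hwd : ∀ s : Set ℝ, MeasurableSet s →
      (∫⁻ x in s, ENNReal.ofReal (f x)) =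
        volume.withDensity (fun x => ENNReal.ofReal (f x)) s :=
    fun s hs => (withDensity_apply _ hs).symm
  have hmonoS : Monotone fun n : ℕ => Ioc (0:ℝ) n :=
    fun i j hij => Ioc_subset_Ioc le_rfl (Nat.cast_le.2 hij)
  rw [hwd _ measurableSet_Ioi, hUnion, hmonoS.directed_le.measure_iUnion] at hbig
  obtain ⟨n, hn⟩ := lt_iSup_iff.1 hbig
  have hn0 : (0:ℝ) ≤ n := n.cast_nonneg
  have hIoc : volume.withDensity (fun x => ENNReal.ofReal (f x)) (Ioc (0:ℝ) n)
      = ENNReal.ofReal (∫ s in Ioc (0:ℝ) (n:ℝ), f s) := by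
    rw [withDensity_apply _ measurableSet_Ioc, ← ofReal_integral_eq_lintegral_ofReal]
    · exact (intervalIntegrable_iff_integrableOn_Ioc_of_le hn0).1 (hint 0 n le_rfl hn0)
    · filter_upwards [ae_restrict_mem measurableSet_Ioc] with x hx
      exact (hfpos x hx.1.le).le
  rw [hIoc] at hn
  have hRn : R < ∫ s in (0:ℝ)..(n:ℝ), f s := by
    rw [integral_of_le hn0]
    exact (ENNReal.ofReal_lt_ofReal_iff_of_nonneg hR.le).1 hn
  set F : ℝ → ℝ := fun t => ∫ s in (0:ℝ)..t, f s with hF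
  have hFcont : ContinuousOn F (Icc (0:ℝ) n) := by
    have := continuousOn_primitive_interval' (hint 0 n le_rfl hn0) left_mem_uIcc
    simpa [uIcc_of_le hn0] using this
  have hF0 : F 0 = 0 := by simp [hF]
  obtain ⟨a, haIcc, hFa⟩ := intermediate_value_Icc hn0 hFcont
    (by rw [hF0]; exact ⟨hR.le, hRn.le⟩)
  have ha0 : 0 < a := by
    rcases haIcc.1.lt_or_eq with h' | h'
    · exact h'
    · exfalso; rw [← h', hF0] at hFa; exact hR.ne' hFa.symm
  set G : ℝ → ℝ := fun t => ∫ s in t..a, f s with hG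
  have hsplit : ∀ t, 0 ≤ t → t ≤ a → F t + G t = R := by
    intro t ht hta
    rw [hF, hG, ← hFa]
    exact integral_add_adjacent_intervals (hint 0 t le_rfl ht) (hint t a ht (ht.trans hta))
  have hGanti : StrictAntiOn G (Icc (0:ℝ) a) := by
    intro t ht t' ht' hlt
    have hpos' : 0 < ∫ s in t..t', f s :=
      intervalIntegral_pos_of_pos_on (hint t t' ht.1 ht'.1)
        (fun x hx => hfpos x (ht.1.trans hx.1.le)) hlt
    have hsum : (∫ s in t..t', f s) + G t' = G t :=
      integral_add_adjacent_intervals (hint t t' ht.1 ht'.1) (hint t' a ht'.1 (ht.1.trans ht.2))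
    linarith
  have hG0 : G 0 = R := by
    have := hsplit 0 le_rfl ha0.le; rw [hF0] at this; linarith
  have hGa : G a = 0 := by simp [hG]
  have hGRF : ∀ t ∈ Icc (0:ℝ) a, G t = R - F t := by
    intro t ht; have := hsplit t ht.1 ht.2; linarith
  have hGcont : ContinuousOn G (Icc (0:ℝ) a) := by
    have hsub : Icc (0:ℝ) a ⊆ Icc (0:ℝ) n := Icc_subset_Icc le_rfl haIcc.2
    exact ((continuousOn_const.sub (hFcont.mono hsub)).congr hGRF)
  set ubar : ℝ → ℝ := Function.invFunOn G (Icc (0:ℝ) a) with hub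
  have hGinj : InjOn G (Icc (0:ℝ) a) := hGanti.injOn
  have hleft : ∀ t ∈ Icc (0:ℝ) a, ubar (G t) = t := fun t ht =>
    hGinj.leftInvOn_invFunOn ht
  have hsurj : ∀ y ∈ Icc (0:ℝ) R, ∃ t ∈ Icc (0:ℝ) a, G t = y := by
    intro y hy
    have := intermediate_value_Icc' ha0.le hGcont
    rw [hGa, hG0] at this
    obtain ⟨t, ht, hGt⟩ := this hy
    exact ⟨t, ht, hGt⟩
  refine ⟨a, ha0, hFa, ubar, hleft, by rw [← hG0]; exact hleft 0 ⟨le_rfl, ha0.le⟩, ?_⟩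
  intro r hr
  obtain ⟨tr, htr, hGtr⟩ := hsurj r ⟨hr.1.le, hr.2.le⟩
  have htr0 : 0 < tr := by
    rcases htr.1.lt_or_eq with h' | h'
    · exact h'
    · exfalso; rw [← h', hG0] at hGtr; exact hr.2.ne hGtr.symm
  have htra : tr < a := by
    rcases htr.2.lt_or_eq with h' | h'
    · exact h'
    · exfalso; rw [h', hGa] at hGtr; exact hr.1.ne hGtr
  have hubr : ubar r = tr := by rw [← hGtr]; exact hleft tr htr
  -- eventually G (ubar y) = y
  have hfg : ∀ᶠ y in nhds r, G (ubar y) = y := by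
    filter_upwards [isOpen_Ioo.mem_nhds hr] with y hy
    obtain ⟨t, ht, hGt⟩ := hsurj y ⟨hy.1.le, hy.2.le⟩
    rw [← hGt, hleft t ht]
  -- continuity of ubar at r
  have hmono : StrictMonoOn (fun y => -(ubar y)) (Ioo (0:ℝ) R) := by
    intro y hy y' hy' hlt
    obtain ⟨t, ht, hGt⟩ := hsurj y ⟨hy.1.le, hy.2.le⟩
    obtain ⟨t', ht', hGt'⟩ := hsurj y' ⟨hy'.1.le, hy'.2.le⟩
    have h1 : ubar y = t := by rw [← hGt]; exact hleft t ht
    have h2 : ubar y' = t' := by rw [← hGt']; exact hleft t' ht'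
    simp only [h1, h2, neg_lt_neg_iff]
    rcases lt_trichotomy t' t with hc | hc | hc
    · exact hc
    · exact absurd (by rw [← hGt', ← hGt, hc] : y' = y) hlt.ne'
    · have hyy : y' < y := by rw [← hGt, ← hGt']; exact hGanti ht ht' hc
      linarith
  have himg : Ioo (-a) (0:ℝ) ⊆ (fun y => -(ubar y)) '' Ioo (0:ℝ) R := by
    intro z hz
    have hz1 : 0 < -z := by linarith [hz.2]
    have hz2 : -z < a := by linarith [hz.1]
    have hmem : -z ∈ Icc (0:ℝ) a := ⟨hz1.le, hz2.le⟩
    have hGz1 : 0 < G (-z) := by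
      rw [← hGa]; exact hGanti hmem ⟨ha0.le, le_rfl⟩ hz2
    have hGz2 : G (-z) < R := by
      rw [← hG0]; exact hGanti ⟨le_rfl, ha0.le⟩ hmem hz1
    exact ⟨G (-z), ⟨hGz1, hGz2⟩, by show -ubar (G (-z)) = z; rw [hleft _ hmem]; ring⟩
  have hcontu : ContinuousAt ubar r := by
    have hmr : -(ubar r) ∈ Ioo (-a) (0:ℝ) := by
      rw [hubr]; exact ⟨by linarith, by linarith⟩
    have hcn : ContinuousAt (fun y => -(ubar y)) r :=
      hmono.continuousAt_of_image_mem_nhds (isOpen_Ioo.mem_nhds hr)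
        (Filter.mem_of_superset (isOpen_Ioo.mem_nhds hmr) himg)
    have hcn2 : ContinuousAt (fun y => -(-(ubar y))) r := hcn.neg
    simpa only [neg_neg] using hcn2
  -- derivative of G at tr
  have hFd : HasDerivAt F (f tr) tr :=
    integral_hasDerivAt_right (hint 0 tr le_rfl htr0.le)
      ⟨univ, Filter.univ_mem, by simpa using hfm.aestronglyMeasurable⟩
      (hfca tr htr0.le)
  have hGd : HasDerivAt G (-(f tr)) tr := by
    have h1 : HasDerivAt (fun u => R - F u) (-(f tr)) tr := hFd.const_sub R
    apply h1.congr_of_eventuallyEq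
    filter_upwards [isOpen_Ioo.mem_nhds (⟨htr0, htra⟩ : tr ∈ Ioo (0:ℝ) a)] with u hu
    exact hGRF u ⟨hu.1.le, hu.2.le⟩
  have hne : -(f tr) ≠ 0 := neg_ne_zero.2 (hfpos tr htr0.le).ne'
  have hder := HasDerivAt.of_local_left_inverse hcontu (hubr ▸ hGd) hne hfg
  have heq : (-(f tr))⁻¹ = -(K * h (ubar r) + ε) := by
    rw [hubr, hf]
    simp only [one_div]
    rw [← neg_inv, inv_inv]
  rwa [heq] at hder
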